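/- arXiv:1309.1071 — 4 statements merged into one kernel-verified Lean document; each statement's English description precedes it below -/
import Mathlib

section
/- Let L/K be a cyclic extension of number fields of prime degree with Galois group generated by σ, and let ν : Am(L/K) → (E_K ∩ N_{L/K}(L^×))/N_{L/K}(E_L) be the homomorphism sending the class of 𝔞 with 𝔞^σ = (α)·𝔞 to the coset of N_{L/K}(α). Then the kernel of ν is exactly the group Am_st(L/K) of strongly ambiguous ideal classes. -/
open NumberField
open scoped nonZeroDivisors

open FractionalIdeal

section Hilbert90Aux

variable {K L : Type*} [Field K] [Field L] [Algebra K L] [FiniteDimensional K L]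

theorem aux_orderOf [IsGalois K L] (σ : L ≃ₐ[K] L)
    (hσ : ∀ τ : L ≃ₐ[K] L, τ ∈ Subgroup.zpowers σ) :
    orderOf σ = Fintype.card (L ≃ₐ[K] L) := by
  have h : Subgroup.zpowers σ = ⊤ := (Subgroup.eq_top_iff' _).2 hσ
  rw [← Nat.card_zpowers, h]
  rw [← Nat.card_eq_fintype_card]
  exact Subgroup.card_top

theorem aux_prod_pow [IsGalois K L] (σ : L ≃ₐ[K] L)
    (hσ : ∀ τ : L ≃ₐ[K] L, τ ∈ Subgroup.zpowers σ) (x : L) :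
    ∏ i ∈ Finset.range (Fintype.card (L ≃ₐ[K] L)), (σ ^ i) x
      = algebraMap K L (Algebra.norm K x) := by
  have hd := aux_orderOf σ hσ
  rw [Algebra.norm_eq_prod_automorphisms]
  rw [← Fin.prod_univ_eq_prod_range (fun i => (σ ^ i) x) (Fintype.card (L ≃ₐ[K] L))]
  have hbij : Function.Bijective
      (fun i : Fin (Fintype.card (L ≃ₐ[K] L)) => σ ^ (i : ℕ)) := by
    rw [Fintype.bijective_iff_injective_and_card]
    refine ⟨fun i j hij => ?_, by simp⟩
    have := pow_injOn_Iio_orderOf (x := σ)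
      (by simpa [hd] using i.2) (by simpa [hd] using j.2) hij
    exact Fin.ext this
  exact Fintype.prod_bijective _ hbij (fun i => (σ ^ (i : ℕ)) x) (fun τ => τ x) (fun i => rfl)

theorem aux_hilbert90 [IsGalois K L] (σ : L ≃ₐ[K] L)
    (hσ : ∀ τ : L ≃ₐ[K] L, τ ∈ Subgroup.zpowers σ) (η : Lˣ)
    (hη : Algebra.norm K (η : L) = 1) :
    ∃ β : Lˣ, σ • β / β = η := by
  classical
  set n := Fintype.card (L ≃ₐ[K] L) with hn
  have hd : orderOf σ = n := aux_orderOf σ hσ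
  set c : ℕ → Lˣ := fun m => ∏ i ∈ Finset.range m, (σ ^ i) • η with hc
  have hc1 : c 1 = η := by
    rw [hc]
    simp only [Finset.prod_range_one, pow_zero, one_smul]
  have hadd : ∀ m k, c (m + k) = c m * (σ ^ m) • c k := by
    intro m k
    induction k with
    | zero => simp [hc]
    | succ k ih =>
        have : m + (k + 1) = (m + k) + 1 := by ring
        rw [this]
        simp only [hc, Finset.prod_range_succ] at ih ⊢
        rw [ih, smul_mul', mul_assoc, smul_smul, ← pow_add]
  have hcn : c n = 1 := by
    apply Units.ext
    have : ((c n : Lˣ) : L) = ∏ i ∈ Finset.range n, (σ ^ i) ((η : Lˣ) : L) := by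
      rw [hc]
      rw [show ((∏ i ∈ Finset.range n, (σ ^ i) • η : Lˣ) : L)
          = ∏ i ∈ Finset.range n, (((σ ^ i) • η : Lˣ) : L) from
        map_prod (Units.coeHom L) _ _]
      exact Finset.prod_congr rfl fun i _ => rfl
    rw [this, aux_prod_pow σ hσ, hη, _root_.map_one, Units.val_one]
  have hmul : ∀ t, c (n * t) = 1 := by
    intro t
    induction t with
    | zero => simp [hc]
    | succ t ih => rw [Nat.mul_succ, hadd, ih, hcn, smul_one, mul_one]
  have hshift : ∀ a t, c (a + n * t) = c a := by
    intro a t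
    rw [hadd, hmul, smul_one, mul_one]
  have hmod : ∀ a b, σ ^ a = σ ^ b → c a = c b := by
    have key : ∀ a b, a ≤ b → σ ^ a = σ ^ b → c a = c b := by
      intro a b hab hpow
      have : a ≡ b [MOD n] := by rw [← hd]; exact (pow_eq_pow_iff_modEq).1 hpow
      obtain ⟨t, ht⟩ : ∃ t, b = a + n * t := by
        have hdvd : n ∣ b - a := (Nat.modEq_iff_dvd' hab).1 this
        obtain ⟨t, ht⟩ := hdvd
        exact ⟨t, by omega⟩
      rw [ht, hshift]
    intro a b hpow
    rcases le_total a b with h | h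
    · exact key a b h hpow
    · exact (key b a h hpow.symm).symm
  have hex : ∀ τ : L ≃ₐ[K] L, ∃ m : ℕ, σ ^ m = τ := by
    intro τ
    have := hσ τ
    rw [← mem_powers_iff_mem_zpowers] at this
    exact this.imp fun m hm => hm
  set ind : (L ≃ₐ[K] L) → ℕ := fun τ => Nat.find (hex τ) with hind
  have hspec : ∀ τ, σ ^ ind τ = τ := fun τ => Nat.find_spec (hex τ)
  have hcoc : groupCohomology.IsMulCocycle₁ (fun τ => c (ind τ)) := by
    intro g h
    show c (ind (g * h)) = g • c (ind h) * c (ind g)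
    have h1 : σ ^ (ind g + ind h) = g * h := by
      rw [pow_add, hspec, hspec]
    have h2 : c (ind (g * h)) = c (ind g + ind h) :=
      hmod _ _ (by rw [hspec, h1])
    rw [h2, hadd, hspec]
    exact mul_comm _ _
  obtain ⟨β, hβ⟩ :=
    groupCohomology.isMulCoboundary₁_of_isMulCocycle₁_of_aut_to_units
      (fun τ => c (ind τ)) hcoc
  refine ⟨β, ?_⟩
  have hfσ : c (ind σ) = η := by
    rw [hmod (ind σ) 1 (by rw [hspec, pow_one]), hc1]
  rw [hβ σ]
  exact hfσ

end Hilbert90Aux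

section FracAux

variable {L : Type*} [Field L] [NumberField L]

theorem aux_span_unit (e : (𝓞 L)ˣ) :
    spanSingleton (𝓞 L)⁰ (algebraMap (𝓞 L) L (e : 𝓞 L)) = 1 := by
  ext z
  rw [mem_spanSingleton, mem_one_iff _]
  constructor
  · rintro ⟨t, rfl⟩
    exact ⟨t * (e : (𝓞 L)), by rw [_root_.map_mul, Algebra.smul_def]⟩
  · rintro ⟨w, rfl⟩
    refine ⟨w * ((e⁻¹ : (𝓞 L)ˣ) : 𝓞 L), ?_⟩
    rw [Algebra.smul_def, ← _root_.map_mul, mul_assoc, Units.inv_mul, mul_one]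

theorem aux_span_eq_one {z : L} (h : spanSingleton (𝓞 L)⁰ z = 1) :
    ∃ e : (𝓞 L)ˣ, algebraMap (𝓞 L) L (e : 𝓞 L) = z := by
  have hz : z ∈ (1 : FractionalIdeal (𝓞 L)⁰ L) := by
    rw [← h, mem_spanSingleton]
    exact ⟨1, one_smul _ _⟩
  obtain ⟨w, hw⟩ := (mem_one_iff _).1 hz
  have h1 : (1 : L) ∈ spanSingleton (𝓞 L)⁰ z := by rw [h]; exact one_mem_one _
  obtain ⟨t, ht⟩ := (mem_spanSingleton _).1 h1
  have hinj : Function.Injective (algebraMap (𝓞 L) L) := IsFractionRing.injective _ _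
  have htw : t * w = 1 := by
    apply hinj
    rw [_root_.map_mul, _root_.map_one, hw]
    rw [Algebra.smul_def] at ht
    exact ht
  exact ⟨⟨w, t, by rw [mul_comm]; exact htw, htw⟩, hw⟩

theorem aux_P_unit (e : (𝓞 L)ˣ) :
    toPrincipalIdeal (𝓞 L) L (Units.map (algebraMap (𝓞 L) L).toMonoidHom e) = 1 := by
  apply Units.ext
  rw [coe_toPrincipalIdeal, Units.val_one]
  exact aux_span_unit e

end FracAux

section FsigAux

variable {K L : Type*} [Field K] [Field L] [NumberField L] [Algebra K L]

theorem aux_Fσ_principal (σ : L ≃ₐ[K] L)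
    (Fσ : (FractionalIdeal (𝓞 L)⁰ L)ˣ ≃* (FractionalIdeal (𝓞 L)⁰ L)ˣ)
    (hFσ : ∀ (I : (FractionalIdeal (𝓞 L)⁰ L)ˣ) (x : L),
      x ∈ (Fσ I : FractionalIdeal (𝓞 L)⁰ L) ↔
        ∃ y ∈ (I : FractionalIdeal (𝓞 L)⁰ L), σ y = x)
    (x : Lˣ) :
    Fσ (toPrincipalIdeal (𝓞 L) L x) = toPrincipalIdeal (𝓞 L) L (σ • x) := by
  apply Units.ext
  ext z
  rw [hFσ]
  simp only [coe_toPrincipalIdeal]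
  constructor
  · rintro ⟨y, hy, rfl⟩
    obtain ⟨t, rfl⟩ := (mem_spanSingleton _).1 hy
    rw [mem_spanSingleton _]
    refine ⟨RingOfIntegers.mapRingEquiv σ t, ?_⟩
    have hval : ((σ • x : Lˣ) : L) = σ (x : L) := rfl
    have halg : algebraMap (𝓞 L) L (RingOfIntegers.mapRingEquiv σ t) = σ (algebraMap (𝓞 L) L t) :=
      rfl
    rw [hval, Algebra.smul_def, Algebra.smul_def, halg, _root_.map_mul]
  · intro hz
    obtain ⟨t, rfl⟩ := (mem_spanSingleton _).1 hz
    obtain ⟨t, rfl⟩ : ∃ s, RingOfIntegers.mapRingEquiv (σ : L ≃+* L) s = t :=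
      ⟨(RingOfIntegers.mapRingEquiv (σ : L ≃+* L)).symm t, (RingOfIntegers.mapRingEquiv (σ : L ≃+* L)).apply_symm_apply t⟩
    refine ⟨t • (x : L), (mem_spanSingleton _).2 ⟨t, rfl⟩, ?_⟩
    have hval : ((σ • x : Lˣ) : L) = σ (x : L) := rfl
    have halg : algebraMap (𝓞 L) L (RingOfIntegers.mapRingEquiv σ t) = σ (algebraMap (𝓞 L) L t) :=
      rfl
    rw [hval, Algebra.smul_def, Algebra.smul_def, halg, _root_.map_mul]

theorem aux_Fσ_pow (σ : L ≃ₐ[K] L)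
    (Fσ : (FractionalIdeal (𝓞 L)⁰ L)ˣ ≃* (FractionalIdeal (𝓞 L)⁰ L)ˣ)
    (hFσ : ∀ (I : (FractionalIdeal (𝓞 L)⁰ L)ˣ) (x : L),
      x ∈ (Fσ I : FractionalIdeal (𝓞 L)⁰ L) ↔
        ∃ y ∈ (I : FractionalIdeal (𝓞 L)⁰ L), σ y = x)
    (n : ℕ) (I : (FractionalIdeal (𝓞 L)⁰ L)ˣ) (x : L) :
    x ∈ (((Fσ ^ n) I : (FractionalIdeal (𝓞 L)⁰ L)ˣ) : FractionalIdeal (𝓞 L)⁰ L) ↔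
      ∃ y ∈ (I : FractionalIdeal (𝓞 L)⁰ L), (σ ^ n) y = x := by
  induction n generalizing x with
  | zero =>
      simp only [pow_zero]
      constructor
      · intro hx; exact ⟨x, hx, rfl⟩
      · rintro ⟨y, hy, rfl⟩; exact hy
  | succ n ih =>
      have h1 : (Fσ ^ (n + 1)) I = Fσ ((Fσ ^ n) I) := by
        rw [pow_succ']; rfl
      rw [h1, hFσ]
      constructor
      · rintro ⟨y, hy, rfl⟩
        obtain ⟨z, hz, rfl⟩ := (ih y).1 hy
        exact ⟨z, hz, by rw [pow_succ']; rfl⟩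
      · rintro ⟨z, hz, rfl⟩
        exact ⟨(σ ^ n) z, (ih _).2 ⟨z, hz, rfl⟩, by rw [pow_succ']; rfl⟩

theorem aux_Fσ_card [NumberField K] [FiniteDimensional K L] [IsGalois K L] (σ : L ≃ₐ[K] L)
    (Fσ : (FractionalIdeal (𝓞 L)⁰ L)ˣ ≃* (FractionalIdeal (𝓞 L)⁰ L)ˣ)
    (hFσ : ∀ (I : (FractionalIdeal (𝓞 L)⁰ L)ˣ) (x : L),
      x ∈ (Fσ I : FractionalIdeal (𝓞 L)⁰ L) ↔
        ∃ y ∈ (I : FractionalIdeal (𝓞 L)⁰ L), σ y = x)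
    (I : (FractionalIdeal (𝓞 L)⁰ L)ˣ) :
    (Fσ ^ Fintype.card (L ≃ₐ[K] L)) I = I := by
  apply Units.ext
  ext x
  rw [aux_Fσ_pow σ Fσ hFσ]
  rw [pow_card_eq_one]
  constructor
  · rintro ⟨y, hy, rfl⟩; exact hy
  · intro hx; exact ⟨x, hx, rfl⟩

end FsigAux

/-- `L/K` is a cyclic extension of number fields of prime degree `ℓ`, with Galois group
generated by `σ`, acting on invertible fractional ideals of `L` via `Fσ` (characterized
by `hFσ`).  `Am` is the subgroup of ambiguous ideal classes, `Amst` the subgroup of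
strongly ambiguous classes, `EN = E_K ∩ N_{L/K}L^×` and `NE = N_{L/K}E_L`.  If
`ν : Am(L/K) → (E_K ∩ N L^×)/N E_L` is the homomorphism sending the class of `𝔞` with
`𝔞^σ = (α)·𝔞` to the class of `N_{L/K}(α)` (hypothesis `hν`), then the kernel of `ν`
is exactly `Am_st(L/K)`. -/
theorem nu_kernel_eq_strongly_ambiguous
    (K L : Type*) [Field K] [Field L] [NumberField K] [NumberField L]
    [Algebra K L] [IsGalois K L] [FiniteDimensional K L]
    (ℓ : ℕ) (hℓ : ℓ.Prime) (hdeg : Module.finrank K L = ℓ)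
    (σ : L ≃ₐ[K] L) (hσ : ∀ τ : L ≃ₐ[K] L, τ ∈ Subgroup.zpowers σ)
    (Fσ : (FractionalIdeal (𝓞 L)⁰ L)ˣ ≃* (FractionalIdeal (𝓞 L)⁰ L)ˣ)
    (hFσ : ∀ (I : (FractionalIdeal (𝓞 L)⁰ L)ˣ) (x : L),
      x ∈ (Fσ I : FractionalIdeal (𝓞 L)⁰ L) ↔
        ∃ y ∈ (I : FractionalIdeal (𝓞 L)⁰ L), σ y = x)
    (Am : Subgroup (ClassGroup (𝓞 L)))
    (hAm : ∀ c : ClassGroup (𝓞 L), c ∈ Am ↔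
      ∀ I : (FractionalIdeal (𝓞 L)⁰ L)ˣ, ClassGroup.mk L I = c → ClassGroup.mk L (Fσ I) = c)
    (Amst : Subgroup (ClassGroup (𝓞 L)))
    (hAmst : ∀ c : ClassGroup (𝓞 L), c ∈ Amst ↔
      ∃ I : (FractionalIdeal (𝓞 L)⁰ L)ˣ, ClassGroup.mk L I = c ∧ Fσ I = I)
    (EN : Subgroup (𝓞 K)ˣ)
    (hEN : EN = ((Units.map (Algebra.norm K : L →* K)).range).comap
      (Units.map (algebraMap (𝓞 K) K).toMonoidHom))
    (NE : Subgroup (𝓞 K)ˣ)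
    (hNE : NE = (Units.map (RingOfIntegers.norm K : 𝓞 L →* 𝓞 K)).range)
    (ν : Am →* (EN ⧸ NE.subgroupOf EN))
    (hν : ∀ (I : (FractionalIdeal (𝓞 L)⁰ L)ˣ) (α : Lˣ) (hI : ClassGroup.mk L I ∈ Am),
      Fσ I = toPrincipalIdeal (𝓞 L) L α * I →
        ∀ u : EN, algebraMap (𝓞 K) K ((u : (𝓞 K)ˣ) : 𝓞 K) = Algebra.norm K (α : L) →
          ν ⟨ClassGroup.mk L I, hI⟩ = QuotientGroup.mk u) :
    ν.ker = Amst.subgroupOf Am := by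
  classical
  ext x
  rw [MonoidHom.mem_ker, Subgroup.mem_subgroupOf]
  -- choose a representative fractional ideal for the class x
  obtain ⟨I, hI⟩ : ∃ I : (FractionalIdeal (𝓞 L)⁰ L)ˣ, ClassGroup.mk L I = (x : ClassGroup (𝓞 L)) :=
    ClassGroup.induction (P := fun c => ∃ I : (FractionalIdeal (𝓞 L)⁰ L)ˣ, ClassGroup.mk L I = c)
      (K := L) (fun I => ⟨I, rfl⟩) _
  have hxAm : ClassGroup.mk L I ∈ Am := by rw [hI]; exact x.2
  have hmkF : ClassGroup.mk L (Fσ I) = ClassGroup.mk L I := by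
    rw [hI]; exact (hAm _).1 x.2 I hI
  -- find α with Fσ I = (α) I
  have h1 : ClassGroup.mk L (Fσ I * I⁻¹) = 1 := by
    rw [_root_.map_mul, _root_.map_inv, hmkF, mul_inv_cancel]
  have hprin := ClassGroup.mk_eq_one_iff.1 h1
  obtain ⟨a, ha⟩ := hprin.principal
  have ha' : ((Fσ I * I⁻¹ : (FractionalIdeal (𝓞 L)⁰ L)ˣ) : FractionalIdeal (𝓞 L)⁰ L)
      = spanSingleton (𝓞 L)⁰ a := by
    apply coeToSubmodule_injective
    show ((Fσ I * I⁻¹ : (FractionalIdeal (𝓞 L)⁰ L)ˣ) : FractionalIdeal (𝓞 L)⁰ L).coeToSubmodule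
      = (spanSingleton (𝓞 L)⁰ a : FractionalIdeal (𝓞 L)⁰ L).coeToSubmodule
    rw [show (spanSingleton (𝓞 L)⁰ a : FractionalIdeal (𝓞 L)⁰ L).coeToSubmodule
        = Submodule.span (𝓞 L) {a} from coe_spanSingleton _ a]
    exact ha
  have ha0 : a ≠ 0 := by
    intro h0
    exact Units.ne_zero (Fσ I * I⁻¹) (by rw [ha', h0, spanSingleton_zero])
  set αu : Lˣ := Units.mk0 a ha0 with hαu
  have hFI : Fσ I = toPrincipalIdeal (𝓞 L) L αu * I := by
    have hPα : toPrincipalIdeal (𝓞 L) L αu = Fσ I * I⁻¹ := by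
      apply Units.ext
      rw [coe_toPrincipalIdeal, ha']
      rfl
    rw [hPα, inv_mul_cancel_right]
  -- the norm of α is a unit of 𝓞 K
  set n := Fintype.card (L ≃ₐ[K] L) with hn
  have hpowI : ∀ m : ℕ, (Fσ ^ m) I
      = toPrincipalIdeal (𝓞 L) L (∏ i ∈ Finset.range m, (σ ^ i) • αu) * I := by
    intro m
    induction m with
    | zero =>
        rw [pow_zero, Finset.prod_range_zero, _root_.map_one, one_mul]
        rfl
    | succ m ih =>
        have h1 : (Fσ ^ (m + 1)) I = Fσ ((Fσ ^ m) I) := by rw [pow_succ']; rfl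
        rw [h1, ih, _root_.map_mul, aux_Fσ_principal σ Fσ hFσ, hFI, ← mul_assoc, ← _root_.map_mul]
        have hsm : σ • (∏ i ∈ Finset.range m, (σ ^ i) • αu)
            = ∏ i ∈ Finset.range m, (σ ^ (i + 1)) • αu := by
          rw [show (σ • ∏ i ∈ Finset.range m, (σ ^ i) • αu)
              = ∏ i ∈ Finset.range m, σ • ((σ ^ i) • αu) from
            map_prod (MulDistribMulAction.toMonoidHom Lˣ σ) _ _]
          exact Finset.prod_congr rfl fun i _ => by rw [smul_smul, ← pow_succ']
        have hprod : σ • (∏ i ∈ Finset.range m, (σ ^ i) • αu) * αu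
            = ∏ i ∈ Finset.range (m + 1), (σ ^ i) • αu := by
          rw [Finset.prod_range_succ', hsm, pow_zero, one_smul]
        rw [hprod]
  have hPN : toPrincipalIdeal (𝓞 L) L (∏ i ∈ Finset.range n, (σ ^ i) • αu) = 1 := by
    have h2 := hpowI n
    rw [aux_Fσ_card σ Fσ hFσ I] at h2
    have h3 : toPrincipalIdeal (𝓞 L) L (∏ i ∈ Finset.range n, (σ ^ i) • αu) * I = 1 * I := by
      rw [one_mul, ← h2]
    exact mul_right_cancel h3
  set π : K := Algebra.norm K ((αu : Lˣ) : L) with hπ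
  have hπ0 : π ≠ 0 := by
    rw [hπ]
    intro h0
    exact αu.ne_zero (Algebra.norm_eq_zero_iff.1 h0)
  have hval : ((∏ i ∈ Finset.range n, (σ ^ i) • αu : Lˣ) : L) = algebraMap K L π := by
    rw [show ((∏ i ∈ Finset.range n, (σ ^ i) • αu : Lˣ) : L)
        = ∏ i ∈ Finset.range n, (σ ^ i) ((αu : Lˣ) : L) from
      (map_prod (Units.coeHom L) _ _).trans (Finset.prod_congr rfl fun i _ => rfl)]
    rw [hn]
    exact aux_prod_pow σ hσ _
  have hspan1 : spanSingleton (𝓞 L)⁰ (algebraMap K L π) = 1 := by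
    rw [← hval]
    have h4 := congrArg Units.val hPN
    rw [coe_toPrincipalIdeal, Units.val_one] at h4
    exact h4
  obtain ⟨e, he⟩ := aux_span_eq_one hspan1
  have hint : IsIntegral ℤ π := by
    have h5 : IsIntegral ℤ (algebraMap K L π) := by
      rw [← he]; exact RingOfIntegers.isIntegral_coe _
    exact (isIntegral_algebraMap_iff (algebraMap K L).injective).1 h5
  have hintinv : IsIntegral ℤ π⁻¹ := by
    have heinv : algebraMap (𝓞 L) L (((e⁻¹ : (𝓞 L)ˣ) : 𝓞 L)) = (algebraMap K L π)⁻¹ := by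
      apply eq_inv_of_mul_eq_one_left
      rw [← he, ← _root_.map_mul, Units.inv_mul, _root_.map_one]
    have h5 : IsIntegral ℤ (algebraMap K L π⁻¹) := by
      rw [map_inv₀, ← heinv]
      exact RingOfIntegers.isIntegral_coe _
    exact (isIntegral_algebraMap_iff (algebraMap K L).injective).1 h5
  set p : 𝓞 K := ⟨π, hint⟩ with hp
  set q : 𝓞 K := ⟨π⁻¹, hintinv⟩ with hq
  have hpq : p * q = 1 := by
    apply RingOfIntegers.ext
    show π * π⁻¹ = 1
    exact mul_inv_cancel₀ hπ0
  have hqp : q * p = 1 := by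
    apply RingOfIntegers.ext
    show π⁻¹ * π = 1
    exact inv_mul_cancel₀ hπ0
  set u0 : (𝓞 K)ˣ := ⟨p, q, hpq, hqp⟩ with hu0def
  have hu0 : u0 ∈ EN := by
    rw [hEN, Subgroup.mem_comap]
    refine ⟨αu, ?_⟩
    apply Units.ext
    show Algebra.norm K ((αu : Lˣ) : L) = algebraMap (𝓞 K) K p
    exact hπ.symm
  set u : EN := ⟨u0, hu0⟩ with hudef
  have hvalu : algebraMap (𝓞 K) K ((u : (𝓞 K)ˣ) : 𝓞 K) = Algebra.norm K ((αu : Lˣ) : L) := by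
    show algebraMap (𝓞 K) K p = _
    exact hπ
  have hνx : ν x = QuotientGroup.mk u := by
    have h6 := hν I αu hxAm hFI u hvalu
    rwa [show (⟨ClassGroup.mk L I, hxAm⟩ : Am) = x from Subtype.ext hI] at h6
  constructor
  · -- kernel → strongly ambiguous
    intro hker
    rw [hνx] at hker
    have hu' : u ∈ NE.subgroupOf EN := (QuotientGroup.eq_one_iff u).1 hker
    rw [Subgroup.mem_subgroupOf] at hu'
    rw [hNE] at hu'
    obtain ⟨ε, hε⟩ := hu'
    set εL : Lˣ := Units.map (algebraMap (𝓞 L) L).toMonoidHom ε with hεL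
    have hnormε : Algebra.norm K ((εL : Lˣ) : L) = π := by
      have h7 := congrArg (fun v : (𝓞 K)ˣ => algebraMap (𝓞 K) K ((v : (𝓞 K)ˣ) : 𝓞 K)) hε
      simpa [hεL] using h7.trans (hvalu.trans hπ.symm)
    have hval2 : ((αu * εL⁻¹ : Lˣ) : L) * ((εL : Lˣ) : L) = ((αu : Lˣ) : L) := by
      rw [← Units.val_mul, inv_mul_cancel_right]
    have hαεnorm : Algebra.norm K ((αu * εL⁻¹ : Lˣ) : L) = 1 := by
      have h8 : Algebra.norm K ((αu * εL⁻¹ : Lˣ) : L) * π = π := by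
        nth_rewrite 1 [← hnormε]
        rw [← _root_.map_mul, hval2]
      refine mul_right_cancel₀ hπ0 ?_
      rw [h8, one_mul]
    obtain ⟨β, hβ⟩ := aux_hilbert90 σ hσ (αu * εL⁻¹) hαεnorm
    rw [hAmst]
    refine ⟨(toPrincipalIdeal (𝓞 L) L β)⁻¹ * I, ?_, ?_⟩
    · rw [_root_.map_mul, _root_.map_inv, hI]
      have h9 : ClassGroup.mk L (toPrincipalIdeal (𝓞 L) L β) = 1 := by
        rw [ClassGroup.mk_eq_one_iff]
        refine ⟨⟨(β : L), ?_⟩⟩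
        rw [coe_toPrincipalIdeal, coe_spanSingleton]
      rw [h9, inv_one, one_mul]
    · rw [_root_.map_mul, _root_.map_inv, aux_Fσ_principal σ Fσ hFσ, hFI]
      have hα2 : αu = (σ • β / β) * εL := by
        rw [hβ, inv_mul_cancel_right]
      have hP : toPrincipalIdeal (𝓞 L) L αu
          = toPrincipalIdeal (𝓞 L) L (σ • β) * (toPrincipalIdeal (𝓞 L) L β)⁻¹ := by
        rw [hα2, div_eq_mul_inv, _root_.map_mul, _root_.map_mul, _root_.map_inv, hεL, aux_P_unit, mul_one]
      rw [hP]
      group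
  · -- strongly ambiguous → kernel
    intro hst
    obtain ⟨J, hJ, hFJ⟩ := (hAmst _).1 hst
    have hJ' : ClassGroup.mk L J ∈ Am := by rw [hJ]; exact x.2
    have h10 : Fσ J = toPrincipalIdeal (𝓞 L) L 1 * J := by
      rw [_root_.map_one, one_mul]; exact hFJ
    have h11 := hν J 1 hJ' h10 ⟨1, EN.one_mem⟩ (by simp)
    rw [show (⟨ClassGroup.mk L J, hJ'⟩ : Am) = x from Subtype.ext hJ] at h11
    rw [h11]
    refine (QuotientGroup.eq_one_iff _).2 ?_
    rw [Subgroup.mem_subgroupOf]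
    exact NE.one_mem
end

section
/- Consider a commutative diagram of abelian groups with exact rows 1 → A → B → C → 1 and 1 → A' → B' → C' → 1 and vertical homomorphisms α : A → A', β : B → B', γ : C → C', each having finite kernel and finite cokernel. Then #ker α · #ker γ · #coker β = #ker β · #coker α · #coker γ. -/
private lemma card_eq_ker_mul_range {G H : Type*} [Group G] [Group H] (φ : G →* H) :
    Nat.card G = Nat.card φ.ker * Nat.card φ.range := by
  rw [Subgroup.card_eq_card_quotient_mul_card_subgroup φ.ker,
    Nat.card_congr (QuotientGroup.quotientKerEquivRange φ).toEquiv, mul_comm]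

/-- Given a commutative diagram of abelian groups with exact rows
`1 → A → B → C → 1` and `1 → A' → B' → C' → 1` and vertical maps
`α : A → A'`, `β : B → B'`, `γ : C → C'` with finite kernels and cokernels, one has
`#ker α · #ker γ · #coker β = #ker β · #coker α · #coker γ`. -/
theorem snake_kernel_cokernel_identity
    {A B C A' B' C' : Type*}
    [CommGroup A] [CommGroup B] [CommGroup C]
    [CommGroup A'] [CommGroup B'] [CommGroup C']
    (f : A →* B) (g : B →* C) (f' : A' →* B') (g' : B' →* C')
    (hf : Function.Injective f) (hg : Function.Surjective g) (hfg : f.range = g.ker)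
    (hf' : Function.Injective f') (hg' : Function.Surjective g') (hfg' : f'.range = g'.ker)
    (α : A →* A') (β : B →* B') (γ : C →* C')
    (hcomm₁ : f'.comp α = β.comp f) (hcomm₂ : g'.comp β = γ.comp g)
    (hkα : Finite α.ker) (hkβ : Finite β.ker) (hkγ : Finite γ.ker)
    (hcα : Finite (A' ⧸ α.range)) (hcβ : Finite (B' ⧸ β.range))
    (hcγ : Finite (C' ⧸ γ.range)) :
    Nat.card α.ker * Nat.card γ.ker * Nat.card (B' ⧸ β.range) =
      Nat.card β.ker * Nat.card (A' ⧸ α.range) * Nat.card (C' ⧸ γ.range) := by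
  classical
  have hc₁ : ∀ a : A, f' (α a) = β (f a) := fun a => DFunLike.congr_fun hcomm₁ a
  have hc₂ : ∀ b : B, g' (β b) = γ (g b) := fun b => DFunLike.congr_fun hcomm₂ b
  -- u : ker α →* ker β
  have huk : ∀ a : α.ker, f a ∈ β.ker := by
    intro a
    have := hc₁ a
    rw [a.2, map_one] at this
    exact this.symm
  let u : α.ker →* β.ker := MonoidHom.mk' (fun a => ⟨f a, huk a⟩)
    (fun a b => by ext; simp)
  -- v : ker β →* ker γ
  have hvk : ∀ b : β.ker, g b ∈ γ.ker := by
    intro b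
    have := hc₂ b
    rw [b.2, map_one] at this
    exact this.symm
  let v : β.ker →* γ.ker := MonoidHom.mk' (fun b => ⟨g b, hvk b⟩)
    (fun a b => by ext; simp)
  -- a section of g
  let sec : C → B := Function.surjInv hg
  have hsec : ∀ c, g (sec c) = c := fun c => Function.surjInv_eq hg c
  -- connecting map δ : ker γ →* coker α
  have hmem : ∀ c : γ.ker, β (sec (c : C)) ∈ f'.range := by
    intro c
    rw [hfg', MonoidHom.mem_ker, hc₂, hsec, c.2]
  let δ₀ : γ.ker → A' := fun c => (MonoidHom.mem_range.mp (hmem c)).choose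
  have hδ₀ : ∀ c : γ.ker, f' (δ₀ c) = β (sec (c : C)) :=
    fun c => (MonoidHom.mem_range.mp (hmem c)).choose_spec
  have hδmul : ∀ c₁ c₂ : γ.ker,
      (QuotientGroup.mk (δ₀ (c₁ * c₂)) : A' ⧸ α.range)
        = QuotientGroup.mk (δ₀ c₁ * δ₀ c₂) := by
    intro c₁ c₂
    rw [QuotientGroup.eq_iff_div_mem]
    have hgd : g (sec ((c₁ * c₂ : γ.ker) : C) / (sec (c₁ : C) * sec (c₂ : C))) = 1 := by
      simp [hsec]
    obtain ⟨a, ha⟩ : sec ((c₁ * c₂ : γ.ker) : C) / (sec (c₁ : C) * sec (c₂ : C)) ∈ f.range := by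
      rw [hfg]; exact hgd
    refine ⟨a, ?_⟩
    apply hf'
    rw [map_div, hδ₀, map_mul, hδ₀, hδ₀, hc₁, ha, map_div, map_mul]
  let δ : γ.ker →* A' ⧸ α.range := MonoidHom.mk'
    (fun c => QuotientGroup.mk (δ₀ c)) (fun c₁ c₂ =>
      by exact hδmul c₁ c₂)
  -- w : coker α →* coker β
  have hwle : α.range ≤ β.range.comap f' := by
    rintro _ ⟨a, rfl⟩
    exact ⟨f a, (hc₁ a).symm⟩
  let w : (A' ⧸ α.range) →* (B' ⧸ β.range) := QuotientGroup.map _ _ f' hwle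
  -- x : coker β →* coker γ
  have hxle : β.range ≤ γ.range.comap g' := by
    rintro _ ⟨b, rfl⟩
    exact ⟨g b, (hc₂ b).symm⟩
  let x : (B' ⧸ β.range) →* (C' ⧸ γ.range) := QuotientGroup.map _ _ g' hxle
  -- exactness facts
  have E1 : Function.Injective u := by
    intro a b h
    have : f (a : A) = f (b : A) := congrArg Subtype.val h
    exact Subtype.ext (hf this)
  have E2 : u.range = v.ker := by
    ext b
    constructor
    · rintro ⟨a, rfl⟩
      have : g (f (a : A)) = 1 := by
        have : f (a : A) ∈ g.ker := hfg ▸ ⟨a, rfl⟩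
        exact this
      exact Subtype.ext this
    · intro hb
      have hgb : g (b : B) = 1 := congrArg Subtype.val hb
      obtain ⟨a, ha⟩ : (b : B) ∈ f.range := by rw [hfg]; exact hgb
      have hak : a ∈ α.ker := by
        apply hf'
        rw [map_one, hc₁, ha, b.2]
      exact ⟨⟨a, hak⟩, Subtype.ext ha⟩
  have E3 : v.range = δ.ker := by
    ext c
    constructor
    · rintro ⟨b, rfl⟩
      have hgd : g (sec (g (b : B)) / (b : B)) = 1 := by simp [hsec]
      obtain ⟨a, ha⟩ : sec (g (b : B)) / (b : B) ∈ f.range := by rw [hfg]; exact hgd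
      have : δ₀ (v b) = α a := by
        apply hf'
        rw [hδ₀, hc₁, ha, map_div, b.2, div_one]
        rfl
      show (QuotientGroup.mk (δ₀ (v b)) : A' ⧸ α.range) = 1
      rw [this]
      exact (QuotientGroup.eq_one_iff _).mpr ⟨a, rfl⟩
    · intro hc
      have : (QuotientGroup.mk (δ₀ c) : A' ⧸ α.range) = 1 := hc
      obtain ⟨a, ha⟩ : δ₀ c ∈ α.range := (QuotientGroup.eq_one_iff _).mp this
      have hbk : sec (c : C) / f a ∈ β.ker := by
        show β _ = 1
        rw [map_div, ← hc₁, ha, hδ₀, div_self']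
      refine ⟨⟨_, hbk⟩, ?_⟩
      apply Subtype.ext
      show g (sec (c : C) / f a) = (c : C)
      have : g (f a) = 1 := by
        have h1 : f a ∈ g.ker := hfg ▸ (⟨a, rfl⟩ : f a ∈ f.range)
        exact h1
      rw [map_div, hsec, this, div_one]
  have E4 : δ.range = w.ker := by
    ext q
    constructor
    · rintro ⟨c, rfl⟩
      show w (QuotientGroup.mk (δ₀ c)) = 1
      show (QuotientGroup.mk (f' (δ₀ c)) : B' ⧸ β.range) = 1
      rw [hδ₀]
      exact (QuotientGroup.eq_one_iff _).mpr ⟨sec (c : C), rfl⟩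
    · intro hq
      obtain ⟨a', rfl⟩ := QuotientGroup.mk_surjective q
      have : (QuotientGroup.mk (f' a') : B' ⧸ β.range) = 1 := hq
      obtain ⟨b, hb⟩ : f' a' ∈ β.range := (QuotientGroup.eq_one_iff _).mp this
      have hck : g b ∈ γ.ker := by
        show γ (g b) = 1
        have h1 : f' a' ∈ g'.ker := hfg' ▸ (⟨a', rfl⟩ : f' a' ∈ f'.range)
        rw [← hc₂, hb]
        exact h1
      refine ⟨⟨g b, hck⟩, ?_⟩
      show (QuotientGroup.mk (δ₀ ⟨g b, hck⟩) : A' ⧸ α.range) = QuotientGroup.mk a'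
      rw [QuotientGroup.eq_iff_div_mem]
      have hgd : g (sec (g b) / b) = 1 := by simp [hsec]
      obtain ⟨a, ha⟩ : sec (g b) / b ∈ f.range := by rw [hfg]; exact hgd
      refine ⟨a, ?_⟩
      apply hf'
      rw [map_div, hδ₀, hc₁, ha, map_div, hb]
  have E5 : w.range = x.ker := by
    ext q
    constructor
    · rintro ⟨p, rfl⟩
      obtain ⟨a', rfl⟩ := QuotientGroup.mk_surjective p
      show (QuotientGroup.mk (g' (f' a')) : C' ⧸ γ.range) = 1
      have : f' a' ∈ g'.ker := hfg' ▸ (⟨a', rfl⟩ : f' a' ∈ f'.range)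
      rw [show g' (f' a') = 1 from this, QuotientGroup.mk_one]
    · intro hq
      obtain ⟨b', rfl⟩ := QuotientGroup.mk_surjective q
      have : (QuotientGroup.mk (g' b') : C' ⧸ γ.range) = 1 := hq
      obtain ⟨c, hc⟩ : g' b' ∈ γ.range := (QuotientGroup.eq_one_iff _).mp this
      obtain ⟨b, rfl⟩ := hg c
      obtain ⟨a', ha'⟩ : b' / β b ∈ f'.range := by
        rw [hfg']
        show g' (b' / β b) = 1
        rw [map_div, hc₂, hc, div_self']
      refine ⟨QuotientGroup.mk a', ?_⟩
      show (QuotientGroup.mk (f' a') : B' ⧸ β.range) = QuotientGroup.mk b'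
      rw [QuotientGroup.eq_iff_div_mem, ha']
      refine ⟨b⁻¹, ?_⟩
      rw [map_inv, div_right_comm, div_self', one_div]
  have E6 : Function.Surjective x := by
    intro q
    obtain ⟨c', rfl⟩ := QuotientGroup.mk_surjective q
    obtain ⟨b', rfl⟩ := hg' c'
    exact ⟨QuotientGroup.mk b', rfl⟩
  -- counting
  have cu : Nat.card α.ker = Nat.card u.range :=
    Nat.card_congr (MonoidHom.ofInjective E1).toEquiv
  have cβ : Nat.card β.ker = Nat.card v.ker * Nat.card v.range := card_eq_ker_mul_range v
  have cγ : Nat.card γ.ker = Nat.card δ.ker * Nat.card δ.range := card_eq_ker_mul_range δ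
  have cA : Nat.card (A' ⧸ α.range) = Nat.card w.ker * Nat.card w.range :=
    card_eq_ker_mul_range w
  have cB : Nat.card (B' ⧸ β.range) = Nat.card x.ker * Nat.card x.range :=
    card_eq_ker_mul_range x
  have cC : Nat.card x.range = Nat.card (C' ⧸ γ.range) := by
    rw [MonoidHom.range_eq_top_of_surjective x E6]
    exact Nat.card_congr Subgroup.topEquiv.toEquiv
  rw [cu, E2, cβ, cγ, E3, cA, E4, cB, E5, ← cC]
  ring
end

section
/- Let L/K be a cyclic extension of number fields with Galois group generated by σ, let H_L^G be the group of G-invariant principal fractional ideals of L, H̃_K the group of principal fractional ideals of L generated by elements of K^×, and Δ = {α ∈ L^× : α^{1-σ} ∈ E_L}. Then (H_L^G : H̃_K) = (Δ : K^×·E_L). -/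
open NumberField
open scoped nonZeroDivisors

/-- The subgroup of elements fixed by a group automorphism. -/
def fixedSubgroup {G : Type*} [Group G] (e : G ≃* G) : Subgroup G where
  carrier := {x | e x = x}
  one_mem' := map_one e
  mul_mem' {a b} ha hb := by
    simp only [Set.mem_setOf_eq, map_mul] at *; rw [ha, hb]
  inv_mem' {a} ha := by
    simp only [Set.mem_setOf_eq, map_inv] at *; rw [ha]

open FractionalIdeal in
theorem ker_toPrin (L : Type*) [Field L] [NumberField L] :
    (toPrincipalIdeal (𝓞 L) L).ker = (Units.map (algebraMap (𝓞 L) L).toMonoidHom).range := by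
  ext x
  rw [MonoidHom.mem_ker]
  constructor
  · intro hx
    have h1 : spanSingleton (𝓞 L)⁰ (x : L) = spanSingleton (𝓞 L)⁰ (1 : L) := by
      rw [spanSingleton_one]
      have h2 := toPrincipalIdeal_eq_iff.mp hx
      simpa using h2
    obtain ⟨z, hz⟩ := spanSingleton_eq_spanSingleton.mp h1
    refine ⟨z⁻¹, Units.ext ?_⟩
    have h3 : (algebraMap (𝓞 L) L z) * (x : L) = 1 := by
      simpa [Units.smul_def, Algebra.smul_def] using hz
    have h4 : (algebraMap (𝓞 L) L z) * (algebraMap (𝓞 L) L ↑z⁻¹) = 1 := by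
      rw [← _root_.map_mul]; simp
    have hz0 : (algebraMap (𝓞 L) L z) ≠ 0 := ((z.isUnit.map (algebraMap (𝓞 L) L)).ne_zero)
    have h5 : ((Units.map (algebraMap (𝓞 L) L).toMonoidHom z⁻¹ : Lˣ) : L)
        = algebraMap (𝓞 L) L ↑z⁻¹ := rfl
    rw [h5]
    exact mul_left_cancel₀ hz0 (by rw [h4, h3])
  · rintro ⟨u, rfl⟩
    have : spanSingleton (𝓞 L)⁰ ((Units.map (algebraMap (𝓞 L) L).toMonoidHom u : Lˣ) : L) = 1 := by
      rw [← spanSingleton_one (S := (𝓞 L)⁰) (P := L)]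
      refine spanSingleton_eq_spanSingleton.mpr ⟨u⁻¹, ?_⟩
      simp [Units.smul_def, Algebra.smul_def, ← _root_.map_mul]
    exact Units.ext (by simpa [coe_toPrincipalIdeal] using this)

open FractionalIdeal in
theorem Fsig_prin (K L : Type*) [Field K] [Field L] [NumberField K] [NumberField L]
    [Algebra K L] [IsGalois K L] [FiniteDimensional K L]
    (σ : L ≃ₐ[K] L)
    (Fσ : (FractionalIdeal (𝓞 L)⁰ L)ˣ ≃* (FractionalIdeal (𝓞 L)⁰ L)ˣ)
    (hFσ : ∀ (I : (FractionalIdeal (𝓞 L)⁰ L)ˣ) (x : L),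
      x ∈ (Fσ I : FractionalIdeal (𝓞 L)⁰ L) ↔
        ∃ y ∈ (I : FractionalIdeal (𝓞 L)⁰ L), σ y = x) (x : Lˣ) :
    Fσ (toPrincipalIdeal (𝓞 L) L x)
      = toPrincipalIdeal (𝓞 L) L (Units.map σ.toRingEquiv.toMonoidHom x) := by
  refine Units.ext ?_
  rw [coe_toPrincipalIdeal]
  ext z
  rw [hFσ, mem_spanSingleton]
  constructor
  · rintro ⟨y, hy, rfl⟩
    rw [coe_toPrincipalIdeal] at hy
    obtain ⟨c, rfl⟩ := (mem_spanSingleton _).mp hy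
    refine ⟨galRestrict (𝓞 K) K L (𝓞 L) σ c, ?_⟩
    have hc := algebraMap_galRestrict_apply (𝓞 K) (B := 𝓞 L) σ c
    simp only [Units.coe_map, MonoidHom.coe_coe, Algebra.smul_def, hc, _root_.map_mul]
    rfl
  · rintro ⟨c, rfl⟩
    refine ⟨(galRestrict (𝓞 K) K L (𝓞 L) σ.symm c) • (x : L), ?_, ?_⟩
    · rw [coe_toPrincipalIdeal]
      exact (mem_spanSingleton _).mpr ⟨_, rfl⟩
    · have hc := algebraMap_galRestrict_apply (𝓞 K) (B := 𝓞 L) σ.symm c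
      simp only [Algebra.smul_def, _root_.map_mul, hc, AlgEquiv.apply_symm_apply,
        Units.coe_map, MonoidHom.coe_coe]
      rfl

/-- `L/K` is a cyclic extension of number fields with Galois group generated by `σ`,
acting on invertible fractional ideals of `L` via `Fσ` (characterized by `hFσ`).
`H_L^G` is the group of `G`-invariant principal fractional ideals of `L`, `H̃_K` the
group of principal fractional ideals of `L` generated by elements of `K^×`, and
`Δ = {α ∈ L^× : α^{1-σ} ∈ E_L}`.  Then `(H_L^G : H̃_K) = (Δ : K^×·E_L)`. -/
theorem index_principal_invariant_eq_index_Delta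
    (K L : Type*) [Field K] [Field L] [NumberField K] [NumberField L]
    [Algebra K L] [IsGalois K L] [FiniteDimensional K L]
    (σ : L ≃ₐ[K] L) (hσ : ∀ τ : L ≃ₐ[K] L, τ ∈ Subgroup.zpowers σ)
    (Fσ : (FractionalIdeal (𝓞 L)⁰ L)ˣ ≃* (FractionalIdeal (𝓞 L)⁰ L)ˣ)
    (hFσ : ∀ (I : (FractionalIdeal (𝓞 L)⁰ L)ˣ) (x : L),
      x ∈ (Fσ I : FractionalIdeal (𝓞 L)⁰ L) ↔
        ∃ y ∈ (I : FractionalIdeal (𝓞 L)⁰ L), σ y = x) :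
    Subgroup.relIndex
        (((toPrincipalIdeal (𝓞 L) L).comp (Units.map (algebraMap K L).toMonoidHom)).range)
        ((toPrincipalIdeal (𝓞 L) L).range ⊓ fixedSubgroup Fσ)
      = Subgroup.relIndex
          ((Units.map (algebraMap K L).toMonoidHom).range ⊔
            (Units.map (algebraMap (𝓞 L) L).toMonoidHom).range)
          (Subgroup.comap
            (MonoidHom.id Lˣ * (Units.map σ.toRingEquiv.toMonoidHom)⁻¹)
            ((Units.map (algebraMap (𝓞 L) L).toMonoidHom).range)) := by
  set f := toPrincipalIdeal (𝓞 L) L with hf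
  set E := (Units.map (algebraMap (𝓞 L) L).toMonoidHom).range with hE
  set Kx := (Units.map (algebraMap K L).toMonoidHom).range with hKx
  set φ := MonoidHom.id Lˣ * (Units.map σ.toRingEquiv.toMonoidHom)⁻¹ with hφ
  have hφ_apply : ∀ x : Lˣ, φ x = x * (Units.map σ.toRingEquiv.toMonoidHom x)⁻¹ := fun x => rfl
  have hker : f.ker = E := ker_toPrin L
  have hFP : ∀ x : Lˣ, Fσ (f x) = f (Units.map σ.toRingEquiv.toMonoidHom x) :=
    Fsig_prin K L σ Fσ hFσ
  have hrange : (f.comp (Units.map (algebraMap K L).toMonoidHom)).range = Kx.map f :=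
    MonoidHom.range_comp _ _
  have key : ∀ x : Lˣ, (f x ∈ fixedSubgroup Fσ ↔ x ∈ Subgroup.comap φ E) := by
    intro x
    have : f x ∈ fixedSubgroup Fσ ↔ Fσ (f x) = f x := Iff.rfl
    rw [this, hFP x, Subgroup.mem_comap, ← hker, MonoidHom.mem_ker, hφ_apply x, map_mul,
      map_inv, mul_inv_eq_one, eq_comm]
  have hB : f.range ⊓ fixedSubgroup Fσ = (Subgroup.comap φ E).map f := by
    ext I
    constructor
    · rintro ⟨⟨x, rfl⟩, hfix⟩
      exact ⟨x, (key x).mp hfix, rfl⟩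
    · rintro ⟨x, hx, rfl⟩
      exact ⟨⟨x, rfl⟩, (key x).mpr hx⟩
  rw [hrange, hB, ← Subgroup.relIndex_comap, Subgroup.comap_map_eq, hker]
end

section
/- Let L/K be a cyclic extension of number fields with Galois group G generated by σ. Then the index of the group of principal fractional ideals of L generated by elements of K^× inside the group of G-invariant principal fractional ideals of L equals (E_L[N] : E_L^{1-σ}): that is, (H_L^G : H̃_K) = (E_L[N] : E_L^{1-σ}). -/
open NumberField
open scoped nonZeroDivisors

section auxiliary

variable {K L : Type*} [Field K] [Field L] [Algebra K L] [FiniteDimensional K L] [IsGalois K L]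

private lemma norm_comp_aut' (σ : L ≃ₐ[K] L) (a : L) :
    Algebra.norm K (σ a) = Algebra.norm K a := by
  apply (algebraMap K L).injective
  rw [Algebra.norm_eq_prod_automorphisms, Algebra.norm_eq_prod_automorphisms]
  exact Fintype.prod_equiv (Equiv.mulRight σ) _ _ (fun τ => rfl)

private lemma fixed_mem_range' (σ : L ≃ₐ[K] L) (hσ : ∀ τ : L ≃ₐ[K] L, τ ∈ Subgroup.zpowers σ)
    (x : L) (hx : σ x = x) : ∃ k : K, algebraMap K L k = x := by
  have hall : ∀ τ : L ≃ₐ[K] L, τ x = x := by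
    intro τ
    have h1 : σ ∈ MulAction.stabilizer (L ≃ₐ[K] L) x := hx
    exact (Subgroup.zpowers_le.mpr h1) (hσ τ)
  have hbot : IntermediateField.fixedField (⊤ : Subgroup (L ≃ₐ[K] L)) = ⊥ :=
    ((IsGalois.tfae (F := K) (E := L)).out 0 1).mp (inferInstance : IsGalois K L)
  have hmem : x ∈ IntermediateField.fixedField (⊤ : Subgroup (L ≃ₐ[K] L)) := fun g => hall g
  rw [hbot, IntermediateField.mem_bot] at hmem
  obtain ⟨k, hk⟩ := hmem
  exact ⟨k, hk⟩

private lemma hilbert90_cyclic' (σ : L ≃ₐ[K] L) (hσ : ∀ τ : L ≃ₐ[K] L, τ ∈ Subgroup.zpowers σ)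
    (u : Lˣ) (hu : Algebra.norm K (u : L) = 1) :
    ∃ β : Lˣ, σ (β : L) = u * β := by
  classical
  by_cases hσ1 : σ = 1
  · have hall : ∀ τ : L ≃ₐ[K] L, τ = 1 := by
      intro τ
      have := hσ τ
      rw [hσ1, Subgroup.zpowers_one_eq_bot, Subgroup.mem_bot] at this
      exact this
    have hcard : Fintype.card (L ≃ₐ[K] L) = 1 := Fintype.card_eq_one_iff.mpr ⟨1, fun g => hall g⟩
    have h1 : algebraMap K L (Algebra.norm K (u : L)) = ∏ τ : L ≃ₐ[K] L, τ (u : L) :=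
      Algebra.norm_eq_prod_automorphisms K _
    have h2 : ∏ τ : L ≃ₐ[K] L, τ (u : L) = (u : L) := by
      have hone : ∀ τ : L ≃ₐ[K] L, τ (u : L) = (u : L) := fun τ => by
        rw [hall τ]; simp
      rw [Finset.prod_congr rfl (fun τ _ => hone τ), Finset.prod_const,
        Finset.card_univ, hcard, pow_one]
    rw [hu, map_one, h2] at h1
    exact ⟨1, by rw [hσ1]; simp [← h1]⟩
  · have hex : ∀ τ : L ≃ₐ[K] L, ∃ n : ℕ, σ ^ n = τ := by
      intro τ
      have := mem_powers_iff_mem_zpowers.mpr (hσ τ)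
      exact (Submonoid.mem_powers_iff _ _).mp this
    set d := orderOf σ with hd
    have hd0 : 0 < d := orderOf_pos σ
    set F : ℕ → Lˣ := fun n => ∏ i ∈ Finset.range n, (σ ^ i) • u with hF
    have hFadd : ∀ a b, F (a + b) = F a * (σ ^ a) • F b := by
      intro a b
      rw [hF]
      simp only [Finset.prod_range_add]
      congr 1
      rw [Finset.smul_prod']
      exact Finset.prod_congr rfl (fun i _ => by rw [smul_smul, ← pow_add])
    have hFd : F d = 1 := by
      apply Units.ext
      have hcoe : ((F d : Lˣ) : L) = ∏ i ∈ Finset.range d, (σ ^ i) ((u : Lˣ) : L) := by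
        rw [hF]
        simp only
        rw [← Units.coeHom_apply, map_prod]
        exact Finset.prod_congr rfl (fun i _ => by
          rw [Units.coeHom_apply, AlgEquiv.smul_units_def, Units.coe_map]; rfl)
      rw [hcoe]
      have hbij : ∏ i ∈ Finset.range d, (σ ^ i) ((u : Lˣ) : L) = ∏ τ : L ≃ₐ[K] L, τ (u : L) := by
        apply Finset.prod_bij (i := fun i _ => σ ^ i)
        · intro i _; exact Finset.mem_univ _
        · intro i hi j hj hij
          rw [Finset.mem_range] at hi hj
          have := pow_eq_pow_iff_modEq.mp hij
          rwa [Nat.ModEq, Nat.mod_eq_of_lt hi, Nat.mod_eq_of_lt hj] at this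
        · intro τ _
          obtain ⟨n, hn⟩ := hex τ
          refine ⟨n % d, Finset.mem_range.mpr (Nat.mod_lt _ hd0), ?_⟩
          rw [pow_mod_orderOf, hn]
        · intro i _; rfl
      rw [hbij, ← Algebra.norm_eq_prod_automorphisms, hu, map_one, Units.val_one]
    have hkey : ∀ m, F (m + d) = F m := by
      intro m
      rw [hFadd, hFd, smul_one, mul_one]
    have hFmod : ∀ n, F n = F (n % d) := by
      intro n
      induction n using Nat.strong_induction_on with
      | _ n ih =>
        by_cases hn : n < d
        · rw [Nat.mod_eq_of_lt hn]
        · push_neg at hn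
          calc F n = F ((n - d) + d) := by rw [Nat.sub_add_cancel hn]
            _ = F (n - d) := hkey _
            _ = F ((n - d) % d) := ih _ (by omega)
            _ = F (n % d) := by rw [Nat.mod_eq_sub_mod hn]
    set cidx : (L ≃ₐ[K] L) → ℕ := fun τ => Nat.find (hex τ) with hcidxdef
    have hcidx : ∀ τ, σ ^ (cidx τ) = τ := fun τ => Nat.find_spec (hex τ)
    set f : (L ≃ₐ[K] L) → Lˣ := fun τ => F (cidx τ) with hfdef
    have hf : groupCohomology.IsMulCocycle₁ f := by
      intro g h
      have h1 : σ ^ (cidx g + cidx h) = g * h := by rw [pow_add, hcidx, hcidx]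
      have h2 : (cidx g + cidx h) % d = (cidx (g * h)) % d :=
        pow_eq_pow_iff_modEq.mp (h1.trans (hcidx (g * h)).symm)
      calc f (g * h) = F (cidx (g * h)) := rfl
        _ = F (cidx g + cidx h) := by
            rw [hFmod (cidx (g * h)), ← h2]; exact (hFmod _).symm
        _ = F (cidx g) * (σ ^ cidx g) • F (cidx h) := hFadd _ _
        _ = g • f h * f g := by rw [hcidx g]; exact mul_comm _ _
    obtain ⟨β, hβ⟩ := groupCohomology.isMulCoboundary₁_of_isMulCocycle₁_of_aut_to_units f hf
    have hfσ : f σ = u := by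
      have h0 : cidx σ = 1 := by
        rw [hcidxdef, Nat.find_eq_iff]
        refine ⟨pow_one σ, ?_⟩
        intro m hm
        interval_cases m
        rw [pow_zero]
        exact fun h => hσ1 h.symm
      rw [hfdef]
      simp only [h0, hF, Finset.prod_range_one, pow_zero, one_smul]
    have hβσ := hβ σ
    rw [hfσ] at hβσ
    refine ⟨β, ?_⟩
    have hsm : σ • β = u * β := by
      rw [div_eq_iff_eq_mul] at hβσ
      exact hβσ
    have hval := congrArg (Units.val) hsm
    rw [AlgEquiv.smul_units_def, Units.coe_map, Units.val_mul] at hval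
    exact hval

end auxiliary

/-- `L/K` is a cyclic extension of number fields with Galois group `G` generated by `σ`,
acting on invertible fractional ideals of `L` via `Fσ` (characterized by `hFσ`).
`H_L^G` is the group of `G`-invariant principal fractional ideals of `L` and `H̃_K` the
group of principal fractional ideals of `L` generated by elements of `K^×`.  Then
`(H_L^G : H̃_K) = (E_L[N] : E_L^{1-σ})`, where `E_L[N]` is the group of units of `L` of
norm `1` and `E_L^{1-σ}` the group of units of the form `u·σ(u)⁻¹`. -/
theorem index_principal_invariant_eq_index_units
    (K L : Type*) [Field K] [Field L] [NumberField K] [NumberField L]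
    [Algebra K L] [IsGalois K L] [FiniteDimensional K L]
    (σ : L ≃ₐ[K] L) (hσ : ∀ τ : L ≃ₐ[K] L, τ ∈ Subgroup.zpowers σ)
    (Fσ : (FractionalIdeal (𝓞 L)⁰ L)ˣ ≃* (FractionalIdeal (𝓞 L)⁰ L)ˣ)
    (hFσ : ∀ (I : (FractionalIdeal (𝓞 L)⁰ L)ˣ) (x : L),
      x ∈ (Fσ I : FractionalIdeal (𝓞 L)⁰ L) ↔
        ∃ y ∈ (I : FractionalIdeal (𝓞 L)⁰ L), σ y = x) :
    Subgroup.relIndex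
        (((toPrincipalIdeal (𝓞 L) L).comp (Units.map (algebraMap K L).toMonoidHom)).range)
        ((toPrincipalIdeal (𝓞 L) L).range ⊓ fixedSubgroup Fσ)
      = Subgroup.relIndex
          ((MonoidHom.id (𝓞 L)ˣ *
            (Units.map (galRestrict (𝓞 K) K L (𝓞 L) σ).toRingEquiv.toMonoidHom)⁻¹).range)
          ((Units.map (RingOfIntegers.norm K : 𝓞 L →* 𝓞 K)).ker) := by
  classical
  have injL : Function.Injective (algebraMap (𝓞 L) L) := IsFractionRing.injective _ _
  haveI : NoZeroSMulDivisors (𝓞 L) L := ⟨fun {c x} h => by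
    rw [Algebra.smul_def, mul_eq_zero] at h
    exact h.imp_left (fun h => injL (h.trans (map_zero _).symm))⟩
  set tP : Lˣ →* (FractionalIdeal (𝓞 L)⁰ L)ˣ := toPrincipalIdeal (𝓞 L) L with htPdef
  set S : Subgroup (FractionalIdeal (𝓞 L)⁰ L)ˣ := tP.range ⊓ fixedSubgroup Fσ with hSdef
  set T : Subgroup (FractionalIdeal (𝓞 L)⁰ L)ˣ :=
    (tP.comp (Units.map (algebraMap K L).toMonoidHom)).range with hTdef
  set σR : (𝓞 L) →* (𝓞 L) := (galRestrict (𝓞 K) K L (𝓞 L) σ).toRingEquiv.toMonoidHom with hσRdef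
  set R2 : Subgroup (𝓞 L)ˣ := (MonoidHom.id (𝓞 L)ˣ * (Units.map σR)⁻¹).range with hR2def
  set K2 : Subgroup (𝓞 L)ˣ := (Units.map (RingOfIntegers.norm K : 𝓞 L →* 𝓞 K)).ker with hK2def
  have hσR : ∀ z : 𝓞 L, algebraMap (𝓞 L) L (σR z) = σ (algebraMap (𝓞 L) L z) :=
    fun z => algebraMap_galRestrict_apply (𝓞 K) σ z
  have hjinj : ∀ z w : (𝓞 L)ˣ,
      algebraMap (𝓞 L) L (z : 𝓞 L) = algebraMap (𝓞 L) L (w : 𝓞 L) → z = w :=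
    fun z w h => Units.ext (injL h)
  have htP_eq : ∀ x y : Lˣ,
      tP x = tP y ↔ ∃ z : (𝓞 L)ˣ, algebraMap (𝓞 L) L (z : 𝓞 L) * (x : L) = (y : L) := by
    intro x y
    rw [htPdef, toPrincipalIdeal_eq_iff, coe_toPrincipalIdeal,
      FractionalIdeal.spanSingleton_eq_spanSingleton]
    exact exists_congr fun z => by rw [Units.smul_def, Algebra.smul_def]
  have hFσ_span : ∀ α : Lˣ, ((Fσ (tP α)) : FractionalIdeal (𝓞 L)⁰ L)
      = FractionalIdeal.spanSingleton (𝓞 L)⁰ (σ (α : L)) := by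
    intro α
    ext x
    rw [hFσ, FractionalIdeal.mem_spanSingleton]
    constructor
    · rintro ⟨y, hy, rfl⟩
      rw [htPdef, coe_toPrincipalIdeal, FractionalIdeal.mem_spanSingleton] at hy
      obtain ⟨z, rfl⟩ := hy
      refine ⟨galRestrict (𝓞 K) K L (𝓞 L) σ z, ?_⟩
      rw [Algebra.smul_def, Algebra.smul_def, algebraMap_galRestrict_apply, ← map_mul]
    · rintro ⟨z, rfl⟩
      refine ⟨((galRestrict (𝓞 K) K L (𝓞 L) σ).symm z : 𝓞 L) • (α : L), ?_, ?_⟩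
      · rw [htPdef, coe_toPrincipalIdeal, FractionalIdeal.mem_spanSingleton]
        exact ⟨_, rfl⟩
      · rw [Algebra.smul_def, Algebra.smul_def, map_mul,
          ← algebraMap_galRestrict_apply (𝓞 K) σ ((galRestrict (𝓞 K) K L (𝓞 L) σ).symm z),
          AlgEquiv.apply_symm_apply]
  -- the subgroup of `Lˣ` of elements generating a `σ`-invariant principal ideal
  set P : Subgroup Lˣ := (fixedSubgroup Fσ).comap tP with hPdef
  have hP_iff : ∀ α : Lˣ,
      α ∈ P ↔ ∃ z : (𝓞 L)ˣ, algebraMap (𝓞 L) L (z : 𝓞 L) * (α : L) = σ (α : L) := by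
    intro α
    have hcancel : ∀ (z : (𝓞 L)ˣ) (a b : L),
        algebraMap (𝓞 L) L (z : 𝓞 L) * a = b →
          algebraMap (𝓞 L) L ((z⁻¹ : (𝓞 L)ˣ) : 𝓞 L) * b = a := by
      intro z a b h
      rw [← h, ← mul_assoc, ← map_mul, ← Units.val_mul, inv_mul_cancel,
        Units.val_one, map_one, one_mul]
    have h1 : α ∈ P ↔ Fσ (tP α) = tP α := Iff.rfl
    rw [h1]
    constructor
    · intro h
      have h2 : FractionalIdeal.spanSingleton (𝓞 L)⁰ (σ (α : L))
          = FractionalIdeal.spanSingleton (𝓞 L)⁰ ((α : Lˣ) : L) := by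
        rw [← hFσ_span α, h, htPdef, coe_toPrincipalIdeal]
      rw [FractionalIdeal.spanSingleton_eq_spanSingleton] at h2
      obtain ⟨z, hz⟩ := h2
      rw [Units.smul_def, Algebra.smul_def] at hz
      exact ⟨z⁻¹, hcancel z _ _ hz⟩
    · rintro ⟨z, hz⟩
      apply Units.ext
      rw [hFσ_span α, htPdef, coe_toPrincipalIdeal]
      rw [FractionalIdeal.spanSingleton_eq_spanSingleton]
      refine ⟨z⁻¹, ?_⟩
      rw [Units.smul_def, Algebra.smul_def]
      exact hcancel z _ _ hz
  have hPz : ∀ α : P, ∃ z : (𝓞 L)ˣ,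
      algebraMap (𝓞 L) L (z : 𝓞 L) * ((α : Lˣ) : L) = σ ((α : Lˣ) : L) :=
    fun α => (hP_iff (α : Lˣ)).mp α.2
  choose θ0 hθ0 using hPz
  have hθmul : ∀ a b : P, θ0 (a * b) = θ0 a * θ0 b := by
    intro a b
    apply hjinj
    apply mul_right_cancel₀ (show (((a * b : P) : Lˣ) : L) ≠ 0 from Units.ne_zero _)
    rw [hθ0 (a * b)]
    have hval : (((a * b : P) : Lˣ) : L) = ((a : Lˣ) : L) * ((b : Lˣ) : L) := rfl
    rw [hval, map_mul, ← hθ0 a, ← hθ0 b, Units.val_mul, map_mul]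
    ring
  set θ : P →* (𝓞 L)ˣ := MonoidHom.mk' θ0 hθmul with hθdef
  have hnormθ : ∀ α : P, θ α ∈ K2 := by
    intro α
    rw [hK2def, MonoidHom.mem_ker]
    apply Units.ext
    rw [Units.coe_map, Units.val_one]
    apply RingOfIntegers.ext
    rw [RingOfIntegers.coe_norm]
    rw [show ((1 : 𝓞 K) : K) = 1 from map_one (algebraMap (𝓞 K) K)]
    have hne : Algebra.norm K ((α : Lˣ) : L) ≠ 0 := by
      simp
    apply mul_right_cancel₀ hne
    have h1 : Algebra.norm K (algebraMap (𝓞 L) L ((θ0 α : (𝓞 L)ˣ) : 𝓞 L))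
        * Algebra.norm K ((α : Lˣ) : L) = Algebra.norm K ((α : Lˣ) : L) := by
      rw [← map_mul, hθ0 α, norm_comp_aut' σ]
    rw [one_mul]
    exact h1
  have hθ'surj : Function.Surjective (θ.codRestrict K2 hnormθ) := by
    rintro ⟨v, hv⟩
    have hv1 : Algebra.norm K (algebraMap (𝓞 L) L (v : 𝓞 L)) = 1 := by
      rw [hK2def, MonoidHom.mem_ker] at hv
      have h2 := congrArg Units.val hv
      rw [Units.coe_map, Units.val_one] at h2
      have h3 : ((RingOfIntegers.norm K ((v : (𝓞 L)ˣ) : 𝓞 L)) : K) = 1 := by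
        rw [h2]; rfl
      rwa [RingOfIntegers.coe_norm, RingOfIntegers.coe_eq_algebraMap] at h3
    obtain ⟨β, hβ⟩ := hilbert90_cyclic' σ hσ
      (Units.map (algebraMap (𝓞 L) L).toMonoidHom v) (by simpa using hv1)
    have hβ' : algebraMap (𝓞 L) L (v : 𝓞 L) * (β : L) = σ (β : L) := by
      rw [hβ]; rfl
    have hβP : β ∈ P := (hP_iff β).mpr ⟨v, hβ'⟩
    refine ⟨⟨β, hβP⟩, ?_⟩
    apply Subtype.ext
    apply hjinj
    exact mul_right_cancel₀ (Units.ne_zero β) ((hθ0 ⟨β, hβP⟩).trans hβ'.symm)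
  have hmemS : ∀ α : P, tP (α : Lˣ) ∈ S := fun α => ⟨⟨(α : Lˣ), rfl⟩, α.2⟩
  set π : P →* S := (tP.comp P.subtype).codRestrict S (fun α => hmemS α) with hπdef
  have hπsurj : Function.Surjective π := by
    rintro ⟨x, hx⟩
    obtain ⟨hx1, hx2⟩ := hx
    obtain ⟨α, rfl⟩ := hx1
    exact ⟨⟨α, hx2⟩, Subtype.ext rfl⟩
  have hmain : (T.subgroupOf S).comap π = (R2.subgroupOf K2).comap (θ.codRestrict K2 hnormθ) := by
    ext α
    simp only [Subgroup.mem_comap, Subgroup.mem_subgroupOf]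
    have hπα : ((π α : S) : (FractionalIdeal (𝓞 L)⁰ L)ˣ) = tP (α : Lˣ) := rfl
    have hθα : ((θ.codRestrict K2 hnormθ α : K2) : (𝓞 L)ˣ) = θ0 α := rfl
    rw [hπα, hθα, hTdef, hR2def]
    simp only [MonoidHom.mem_range, MonoidHom.comp_apply, MonoidHom.mul_apply,
      MonoidHom.inv_apply, MonoidHom.id_apply]
    constructor
    · rintro ⟨k, hk⟩
      obtain ⟨z, hz⟩ := (htP_eq _ _).mp hk
      have hz' : algebraMap (𝓞 L) L (z : 𝓞 L) * algebraMap K L (k : K) = ((α : Lˣ) : L) := by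
        rw [← hz]; rfl
      have hknz : algebraMap K L (k : K) ≠ 0 :=
        (map_ne_zero_iff _ (algebraMap K L).injective).mpr (Units.ne_zero k)
      have hc : σ ((α : Lˣ) : L)
          = algebraMap (𝓞 L) L (σR (z : 𝓞 L)) * algebraMap K L (k : K) := by
        rw [← hz', map_mul, ← hσR, AlgEquiv.commutes]
      have h5 : algebraMap (𝓞 L) L ((θ0 α : (𝓞 L)ˣ) : 𝓞 L)
            * (algebraMap (𝓞 L) L (z : 𝓞 L) * algebraMap K L (k : K))
          = algebraMap (𝓞 L) L (σR (z : 𝓞 L)) * algebraMap K L (k : K) := by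
        rw [hz', hθ0 α, hc]
      refine ⟨z⁻¹, ?_⟩
      rw [map_inv, inv_inv, inv_mul_eq_iff_eq_mul]
      apply hjinj
      rw [Units.coe_map, Units.val_mul, map_mul]
      apply mul_right_cancel₀ hknz
      rw [← h5]
      ring
    · rintro ⟨w, hw⟩
      have hw2 : θ0 α * Units.map σR w = w := by
        rw [← hw, inv_mul_cancel_right]
      have h7 : algebraMap (𝓞 L) L ((θ0 α : (𝓞 L)ˣ) : 𝓞 L)
            * σ (algebraMap (𝓞 L) L ((w : (𝓞 L)ˣ) : 𝓞 L))
          = algebraMap (𝓞 L) L ((w : (𝓞 L)ˣ) : 𝓞 L) := by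
        have h8 := congrArg (fun t : (𝓞 L)ˣ => algebraMap (𝓞 L) L (t : 𝓞 L)) hw2
        simp only [Units.val_mul, map_mul, Units.coe_map] at h8
        rw [hσR] at h8
        exact h8
      set a : L := ((α : Lˣ) : L) with hadef
      set b : L := algebraMap (𝓞 L) L ((w : (𝓞 L)ˣ) : 𝓞 L) with hbdef
      have hbne : b ≠ 0 := by
        rw [hbdef]
        exact (map_ne_zero_iff _ injL).mpr (Units.ne_zero w)
      have hfix : σ (a * b) = a * b := by
        rw [map_mul]
        calc σ a * σ b = (algebraMap (𝓞 L) L ((θ0 α : (𝓞 L)ˣ) : 𝓞 L) * a) * σ b := by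
              rw [hθ0 α]
          _ = a * (algebraMap (𝓞 L) L ((θ0 α : (𝓞 L)ˣ) : 𝓞 L) * σ b) := by ring
          _ = a * b := by rw [h7]
      obtain ⟨k0, hk0⟩ := fixed_mem_range' σ hσ _ hfix
      have hk0ne : k0 ≠ 0 := by
        intro h
        rw [h, map_zero] at hk0
        exact (mul_ne_zero (Units.ne_zero (α : Lˣ)) hbne) hk0.symm
      refine ⟨Units.mk0 k0 hk0ne, ?_⟩
      rw [htP_eq]
      refine ⟨w⁻¹, ?_⟩
      have hval : ((Units.map (algebraMap K L).toMonoidHom (Units.mk0 k0 hk0ne) : Lˣ) : L)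
          = a * b := by
        rw [Units.coe_map]
        exact hk0
      rw [hval]
      have hbinv : algebraMap (𝓞 L) L ((w⁻¹ : (𝓞 L)ˣ) : 𝓞 L) * b = 1 := by
        rw [hbdef, ← map_mul, ← Units.val_mul, inv_mul_cancel, Units.val_one, map_one]
      calc algebraMap (𝓞 L) L ((w⁻¹ : (𝓞 L)ˣ) : 𝓞 L) * (a * b)
          = a * (algebraMap (𝓞 L) L ((w⁻¹ : (𝓞 L)ˣ) : 𝓞 L) * b) := by ring
        _ = a := by rw [hbinv, mul_one]
  calc T.relIndex S = (T.subgroupOf S).index := rfl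
    _ = ((T.subgroupOf S).comap π).index :=
        ((T.subgroupOf S).index_comap_of_surjective hπsurj).symm
    _ = ((R2.subgroupOf K2).comap (θ.codRestrict K2 hnormθ)).index := by rw [hmain]
    _ = (R2.subgroupOf K2).index := (R2.subgroupOf K2).index_comap_of_surjective hθ'surj
    _ = R2.relIndex K2 := rfl
end
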